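/- Let A_0 generate a C_0-semigroup on a Banach space X, let p ≥ 1, and let α ∈ D(A^{p}) where A extends A_0. For j ≥ 1 define v_j(τ) = Σ_{l=0}^{p−1} (τ^l/(l+j)!) A^l α + τ^p φ_{p+j}(τA_0) A^p α. Then v_j satisfies v_j'(τ) = (A − j/τ) v_j(τ) + (1/((j−1)! τ)) α for τ > 0, and v_j(0) = α/j!. -/

import Mathlib

open Finset intervalIntegral

/-- `φ_k(τA₀)x = (1/τ^k) ∫_0^τ e^{(τ−σ)A₀} σ^{k−1}/(k−1)! x dσ`, expressed through the
semigroup `S t = e^{tA₀}`. -/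
noncomputable def phiOp {X : Type*} [NormedAddCommGroup X] [NormedSpace ℝ X]
    (S : ℝ → X →L[ℝ] X) (k : ℕ) (τ : ℝ) (x : X) : X :=
  (1 / τ ^ k) • ∫ σ in (0:ℝ)..τ, (σ ^ (k-1) / (Nat.factorial (k-1) : ℝ)) • S (τ - σ) x

section
variable {X : Type*} [NormedAddCommGroup X] [NormedSpace ℝ X] [CompleteSpace X]
variable (S : ℝ → X →L[ℝ] X)

noncomputable def MM (x : X) (k : ℕ) (t : ℝ) : X := ∫ u in (0:ℝ)..t, u ^ k • S u x

variable (hScont : ∀ x : X, Continuous fun t => S t x)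
include hScont

omit [CompleteSpace X] in
lemma contMint (x : X) (k : ℕ) : Continuous fun u : ℝ => u ^ k • S u x :=
  (continuous_pow k).smul (hScont x)

lemma MMderiv (x : X) (k : ℕ) (t : ℝ) :
    HasDerivAt (MM S x k) (t ^ k • S t x) t :=
  integral_hasDerivAt_right ((contMint S hScont x k).intervalIntegrable _ _)
    ((contMint S hScont x k).stronglyMeasurableAtFilter _ _)
    (contMint S hScont x k).continuousAt

lemma MMshift (hSadd : ∀ a b : ℝ, 0 ≤ a → 0 ≤ b → S (a + b) = S a ∘L S b)
    (x : X) (k : ℕ) {t s : ℝ} (ht : 0 ≤ t) (hs : 0 ≤ s) :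
    S s (MM S x k t) =
      ∑ i ∈ range (k + 1), ((k.choose i : ℝ) * (-s) ^ (k - i)) •
        (MM S x i (t + s) - MM S x i s) := by
  have h1 : S s (MM S x k t) = ∫ u in (0:ℝ)..t, u ^ k • S (u + s) x := by
    rw [MM, ← ContinuousLinearMap.intervalIntegral_comp_comm _
      ((contMint S hScont x k).intervalIntegrable _ _)]
    refine intervalIntegral.integral_congr fun u hu => ?_
    rw [Set.uIcc_of_le ht] at hu
    rw [map_smul, add_comm u s, hSadd s u hs hu.1]
    rfl
  have h2 : ∀ u : ℝ, u ^ k • S (u + s) x = (fun r : ℝ => (r - s) ^ k • S r x) (u + s) := by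
    intro u; simp
  rw [h1]
  simp_rw [h2]
  rw [intervalIntegral.integral_comp_add_right (fun r : ℝ => (r - s) ^ k • S r x) s, zero_add]
  have h3 : ∀ r : ℝ, (r - s) ^ k • S r x =
      ∑ i ∈ range (k + 1), ((k.choose i : ℝ) * (-s) ^ (k - i)) • (r ^ i • S r x) := by
    intro r
    simp_rw [smul_smul]
    rw [← Finset.sum_smul]
    congr 1
    rw [sub_eq_add_neg, add_pow]
    exact Finset.sum_congr rfl fun i _ => by ring
  simp_rw [h3]
  rw [intervalIntegral.integral_finset_sum]
  · refine Finset.sum_congr rfl fun i _ => ?_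
    rw [intervalIntegral.integral_smul]
    congr 1
    rw [MM, MM, intervalIntegral.integral_interval_sub_left
      ((contMint S hScont x i).intervalIntegrable _ _)
      ((contMint S hScont x i).intervalIntegrable _ _)]
  · intro i _
    exact ((contMint S hScont x i).intervalIntegrable _ _).smul _
end

section
variable {X : Type*} [NormedAddCommGroup X] [NormedSpace ℝ X] [CompleteSpace X]
variable (S : ℝ → X →L[ℝ] X)
variable (hScont : ∀ x : X, Continuous fun t => S t x)

lemma right_deriv_eq' {f g : ℝ → X} {a b : X} (hf : HasDerivAt f a 0) (hg : HasDerivAt g b 0)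
    (h : ∀ s : ℝ, 0 ≤ s → f s = g s) : a = b := by
  have hu : UniqueDiffWithinAt ℝ (Set.Ici (0:ℝ)) 0 := uniqueDiffOn_Ici 0 0 Set.self_mem_Ici
  have hf' : HasDerivWithinAt f a (Set.Ici (0:ℝ)) 0 := hf.hasDerivWithinAt
  have hg' : HasDerivWithinAt f b (Set.Ici (0:ℝ)) 0 :=
    (hg.hasDerivWithinAt).congr (fun s hs => (h s hs)) (h 0 le_rfl)
  rw [← hf'.derivWithin hu, ← hg'.derivWithin hu]

include hScont

set_option maxHeartbeats 1000000 in
lemma AMM (A : X →ₗ[ℝ] X) (hS0 : S 0 = 1)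
    (hSadd : ∀ a b : ℝ, 0 ≤ a → 0 ≤ b → S (a + b) = S a ∘L S b)
    (hgen : ∀ (x : X) (t : ℝ), 0 ≤ t → HasDerivAt (fun r => S r x) (A (S t x)) t)
    (x : X) (k : ℕ) {t : ℝ} (ht : 0 ≤ t) :
    A (MM S x k t) = t ^ k • S t x - (k : ℝ) • MM S x (k-1) t - (0:ℝ) ^ k • x := by
  have hA0 : HasDerivAt (fun s => S s (MM S x k t)) (A (MM S x k t)) 0 := by
    have := hgen (MM S x k t) 0 le_rfl
    rwa [hS0, ContinuousLinearMap.one_apply] at this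
  set c : ℕ → ℝ → ℝ := fun i s => (k.choose i : ℝ) * (-s) ^ (k - i) with hc
  set c' : ℕ → ℝ := fun i => (k.choose i : ℝ) * (((k - i : ℕ) : ℝ) * (-(0:ℝ)) ^ (k - i - 1) * (-1)) with hc'
  set V : ℕ → ℝ → X := fun i s => MM S x i (t + s) - MM S x i s with hV
  set V' : ℕ → X := fun i => (t + 0) ^ i • S (t + 0) x - (0:ℝ) ^ i • S 0 x with hV'
  set D : X := ∑ i ∈ range (k + 1), (c i 0 • V' i + c' i • V i 0) with hDdef
  have hN : HasDerivAt (fun s => ∑ i ∈ range (k + 1), c i s • V i s) D 0 := by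
    refine HasDerivAt.fun_sum fun i _ => ?_
    have hneg : HasDerivAt (fun s : ℝ => -s) (-1) 0 := (hasDerivAt_id (0:ℝ)).neg
    have h1 : HasDerivAt (fun s : ℝ => (-s) ^ (k - i))
        ((((k - i : ℕ) : ℝ) * (-(0:ℝ)) ^ (k - i - 1)) * (-1)) 0 :=
      (hasDerivAt_pow (k - i) (-(0:ℝ))).comp 0 hneg
    have hsc : HasDerivAt (fun s => c i s) (c' i) 0 := by
      simpa [hc, hc', mul_assoc] using h1.const_mul (k.choose i : ℝ)
    have hvec : HasDerivAt (fun s => V i s) (V' i) 0 :=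
      ((MMderiv S hScont x i (t + 0)).comp_const_add t 0).sub (MMderiv S hScont x i 0)
    exact hsc.smul hvec
  have hAD : A (MM S x k t) = D :=
    right_deriv_eq' hA0 hN fun s hs => MMshift S hScont hSadd x k ht hs
  have hM0 : ∀ i, MM S x i 0 = 0 := fun i => intervalIntegral.integral_same
  have hsum1 : ∑ i ∈ range (k+1), c i 0 • V' i = t ^ k • S t x - (0:ℝ) ^ k • x := by
    rw [Finset.sum_eq_single k]
    · simp [hc, hV', hS0]
    · intro i hi hne
      have hik : i ≤ k := Nat.lt_succ_iff.mp (Finset.mem_range.mp hi)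
      have h0 : (-(0:ℝ)) ^ (k - i) = 0 := by
        rw [neg_zero]; exact zero_pow (by omega)
      simp only [hc]
      rw [h0, mul_zero, zero_smul]
    · intro h; exact absurd (Finset.self_mem_range_succ k) h
  have hsum2 : ∑ i ∈ range (k+1), c' i • V i 0 = -((k:ℝ) • MM S x (k-1) t) := by
    rw [Finset.sum_eq_single (k-1)]
    · cases k with
      | zero => simp [hc', hV, hM0]
      | succ m =>
        simp [hc', hV, hM0, Nat.choose_succ_self_right]
        module
    · intro i hi hne
      have hik : i ≤ k := Nat.lt_succ_iff.mp (Finset.mem_range.mp hi)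
      rcases eq_or_lt_of_le hik with rfl | hlt
      · simp [hc']
      · have h0 : (-(0:ℝ)) ^ (k - i - 1) = 0 := by
          rw [neg_zero]; exact zero_pow (by omega)
        simp only [hc']
        rw [h0]
        simp
    · intro h; exact absurd (Finset.mem_range.mpr (by omega)) h
  rw [hAD, hDdef, Finset.sum_add_distrib, hsum1, hsum2]
  abel
end

set_option maxHeartbeats 1000000 in
/-- Lemma 4.2 (interior equation): let `A₀` generate a `C₀`-semigroup `S` on a Banach
space `X`, let `A` extend `A₀`, `p ≥ 1`, `j ≥ 1`, and `α ∈ D(A^p)`.  Then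
`v_j(τ) = Σ_{l=0}^{p−1} (τ^l/(l+j)!) A^l α + τ^p φ_{p+j}(τA₀) A^p α` satisfies
`v_j'(τ) = (A − j/τ) v_j(τ) + (1/((j−1)! τ)) α` for `τ > 0`, and `v_j(0) = α/j!`. -/
theorem vj_solves_ivp {X : Type*} [NormedAddCommGroup X] [NormedSpace ℝ X]
    [CompleteSpace X]
    (S : ℝ → X →L[ℝ] X) (hS0 : S 0 = 1)
    (hSadd : ∀ a b : ℝ, 0 ≤ a → 0 ≤ b → S (a + b) = S a ∘L S b)
    (hScont : ∀ x : X, Continuous fun t => S t x)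
    (A : X →ₗ[ℝ] X)
    (hgen : ∀ (x : X) (t : ℝ), 0 ≤ t → HasDerivAt (fun r => S r x) (A (S t x)) t)
    (p j : ℕ) (hp : 1 ≤ p) (hj : 1 ≤ j) (α : X) :
    let v : ℝ → X := fun τ =>
      (∑ l ∈ range p, (τ ^ l / (Nat.factorial (l + j) : ℝ)) • (A ^ l) α) +
        τ ^ p • phiOp S (p + j) τ ((A ^ p) α)
    v 0 = (1 / (Nat.factorial j : ℝ)) • α ∧
      ∀ τ : ℝ, 0 < τ →
        HasDerivAt v
          (A (v τ) - ((j : ℝ) / τ) • v τ + (1 / ((Nat.factorial (j-1) : ℝ) * τ)) • α) τ := by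
  obtain ⟨p, rfl⟩ : ∃ q, p = q + 1 := ⟨p - 1, by omega⟩
  obtain ⟨j, rfl⟩ : ∃ q, j = q + 1 := ⟨j - 1, by omega⟩
  intro v
  have hv0 : v 0 = (1 / (Nat.factorial (j+1) : ℝ)) • α := by
    show (∑ l ∈ range (p+1), ((0:ℝ) ^ l / (Nat.factorial (l + (j+1)) : ℝ)) • (A ^ l) α) +
        (0:ℝ) ^ (p+1) • phiOp S ((p+1) + (j+1)) 0 ((A ^ (p+1)) α) = _
    rw [zero_pow (by omega : p + 1 ≠ 0), zero_smul, add_zero,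
      Finset.sum_eq_single_of_mem 0 (Finset.mem_range.mpr (by omega))
        (fun l _ hl => by rw [zero_pow hl, zero_div, zero_smul])]
    simp
  refine ⟨hv0, fun τ hτ => ?_⟩
  set x := (A ^ (p+1)) α with hx
  set n : ℕ := p + j + 1 with hn
  have hnpj : n + 1 = (p+1) + (j+1) := by omega
  set b : ℕ → ℝ := fun m => (n.choose m : ℝ) * (-1) ^ m / (n.factorial : ℝ) with hb
  set P : ℝ → X := fun t => ∑ l ∈ range (p+1), (t ^ l / (Nat.factorial (l + (j+1)) : ℝ)) • (A ^ l) α with hP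
  set W : ℝ → X := fun t => ∑ m ∈ range (n+1), (b m * t ^ (n - m)) • MM S x m t with hW
  set g : ℝ → X := fun t => P t + (t ^ (p+1) / t ^ (n+1)) • W t with hg
  have hJ : ∀ t : ℝ, (∫ σ in (0:ℝ)..t, (σ ^ n / (n.factorial : ℝ)) • S (t - σ) x) = W t := by
    intro t
    have e1 : (∫ σ in (0:ℝ)..t, (σ ^ n / (n.factorial : ℝ)) • S (t - σ) x)
        = ∫ σ in (0:ℝ)..t, (fun u => ((t - u) ^ n / (n.factorial : ℝ)) • S u x) (t - σ) :=
      intervalIntegral.integral_congr fun σ _ => by simp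
    rw [e1, intervalIntegral.integral_comp_sub_left
      (fun u => ((t - u) ^ n / (n.factorial : ℝ)) • S u x) t, sub_self, sub_zero]
    have e2 : ∀ u : ℝ, ((t - u) ^ n / (n.factorial : ℝ)) • S u x
        = ∑ m ∈ range (n+1), (b m * t ^ (n - m)) • (u ^ m • S u x) := by
      intro u
      simp_rw [smul_smul]
      rw [← Finset.sum_smul]
      congr 1
      rw [sub_eq_add_neg, add_comm, add_pow]
      rw [Finset.sum_div]
      exact Finset.sum_congr rfl fun m _ => by rw [hb]; ring
    simp_rw [e2]
    rw [intervalIntegral.integral_finset_sum (μ := MeasureTheory.volume) (a := (0:ℝ)) (b := t)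
      (f := fun m u => (b m * t ^ (n - m)) • (u ^ m • S u x))
      (fun m _ => ((contMint S hScont x m).intervalIntegrable _ _).smul _)]
    exact Finset.sum_congr rfl fun m _ => intervalIntegral.integral_smul _ _
  have hrep : ∀ t : ℝ, v t = g t := by
    intro t
    show P t + t ^ (p+1) • phiOp S ((p+1) + (j+1)) t x = P t + (t ^ (p+1) / t ^ (n+1)) • W t
    congr 1
    rw [phiOp, ← hnpj]
    simp only [Nat.add_sub_cancel]
    rw [hJ t, smul_smul, mul_one_div]
  have hτ' : (0:ℝ) ≤ τ := le_of_lt hτ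
  have hτne : τ ≠ 0 := ne_of_gt hτ
  have hPd : HasDerivAt P (∑ l ∈ range (p+1),
      (((l : ℝ) * τ ^ (l-1)) / (Nat.factorial (l + (j+1)) : ℝ)) • (A ^ l) α) τ := by
    rw [hP]
    exact HasDerivAt.fun_sum fun l _ =>
      ((hasDerivAt_pow l τ).div_const _).smul_const ((A ^ l) α)
  have hWd : HasDerivAt W (∑ m ∈ range (n+1),
      ((b m * τ ^ (n-m)) • (τ ^ m • S τ x) +
        (b m * (((n-m : ℕ) : ℝ) * τ ^ (n-m-1))) • MM S x m τ)) τ := by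
    rw [hW]
    exact HasDerivAt.fun_sum fun m _ =>
      ((hasDerivAt_pow (n-m) τ).const_mul (b m)).smul (MMderiv S hScont x m τ)
  have had : HasDerivAt (fun t : ℝ => t ^ (p+1) / t ^ (n+1))
      (((((p+1:ℕ):ℝ) * τ ^ p) * τ ^ (n+1) - τ ^ (p+1) * (((n+1 : ℕ):ℝ) * τ ^ n)) / (τ ^ (n+1)) ^ 2) τ := by
    have := (hasDerivAt_pow (p+1) τ).div (hasDerivAt_pow (n+1) τ) (pow_ne_zero _ hτne)
    simpa [Pi.div_def] using this
  have hgd : HasDerivAt g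
      ((∑ l ∈ range (p+1), (((l : ℝ) * τ ^ (l-1)) / (Nat.factorial (l + (j+1)) : ℝ)) • (A ^ l) α) +
       ((τ ^ (p+1) / τ ^ (n+1)) • (∑ m ∈ range (n+1),
          ((b m * τ ^ (n-m)) • (τ ^ m • S τ x) +
            (b m * (((n-m : ℕ) : ℝ) * τ ^ (n-m-1))) • MM S x m τ)) +
        ((((p+1:ℕ):ℝ) * τ ^ p * τ ^ (n+1) - τ ^ (p+1) * (((n+1 : ℕ):ℝ) * τ ^ n)) / (τ ^ (n+1)) ^ 2) • W τ)) τ := by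
    rw [hg]
    exact hPd.add (had.smul hWd)
  have hvd := hgd.congr_of_eventuallyEq (Filter.Eventually.of_forall hrep)
  have hAP : A (P τ) = ∑ l ∈ range (p+1), (τ ^ l / (Nat.factorial (l + (j+1)) : ℝ)) • (A ^ (l+1)) α := by
    rw [hP, map_sum]
    refine Finset.sum_congr rfl fun l _ => ?_
    rw [map_smul]
    congr 1
    rw [pow_succ', Module.End.mul_apply]
  have hAW : A (W τ) = ∑ m ∈ range (n+1), (b m * τ ^ (n-m)) •
      (τ ^ m • S τ x - (m:ℝ) • MM S x (m-1) τ - (0:ℝ) ^ m • x) := by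
    rw [hW, map_sum]
    refine Finset.sum_congr rfl fun m _ => ?_
    rw [map_smul, AMM S hScont A hS0 hSadd hgen x m hτ']
  have hAv : A (v τ) = A (P τ) + (τ ^ (p+1) / τ ^ (n+1)) • A (W τ) := by
    rw [hrep τ]
    show A (P τ + (τ ^ (p+1) / τ ^ (n+1)) • W τ) = _
    rw [map_add, map_smul]
  have hfac_ne : ∀ k : ℕ, ((k.factorial : ℝ)) ≠ 0 :=
    fun k => Nat.cast_ne_zero.mpr (Nat.factorial_ne_zero k)
  -- (I2)
  have I2 : ∑ m ∈ range (n+1), (b m * τ ^ (n-m)) • ((m:ℝ) • MM S x (m-1) τ)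
      = -∑ m ∈ range (n+1), (b m * (((n-m : ℕ) : ℝ) * τ ^ (n-m-1))) • MM S x m τ := by
    rw [Finset.sum_range_succ' (fun m => (b m * τ ^ (n-m)) • ((m:ℝ) • MM S x (m-1) τ)) n]
    rw [Finset.sum_range_succ (fun m => (b m * (((n-m : ℕ) : ℝ) * τ ^ (n-m-1))) • MM S x m τ) n]
    simp only [Nat.cast_zero, zero_smul, smul_zero, add_zero, Nat.sub_self, Nat.cast_zero,
      zero_mul, mul_zero]
    rw [← Finset.sum_neg_distrib]
    refine Finset.sum_congr rfl fun i hi => ?_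
    have hin : i < n := Finset.mem_range.mp hi
    have hcast := congrArg (fun k : ℕ => (k : ℝ)) (Nat.choose_succ_right_eq n i)
    push_cast at hcast
    rw [Nat.add_sub_cancel, smul_smul, ← neg_smul]
    congr 1
    rw [hb]
    have hsub : n - (i+1) = n - i - 1 := by omega
    rw [hsub]
    push_cast [Nat.cast_sub (le_of_lt hin)] at hcast ⊢
    linear_combination (((-1:ℝ)) ^ (i+1) * τ ^ (n-i-1) / (n.factorial : ℝ)) * hcast
  -- (I3)
  have I3 : ∑ m ∈ range (n+1), (b m * τ ^ (n-m)) • ((0:ℝ) ^ m • x)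
      = (τ ^ n / (n.factorial : ℝ)) • x := by
    rw [Finset.sum_eq_single_of_mem 0 (Finset.mem_range.mpr (by omega))
      (fun m _ hm => by rw [zero_pow hm, zero_smul, smul_zero])]
    rw [pow_zero, one_smul, Nat.sub_zero, hb]
    simp only [Nat.choose_zero_right, Nat.cast_one, pow_zero]
    congr 1
    ring
  have e_x : (τ ^ (p+1) / τ ^ (n+1)) * (τ ^ n / (n.factorial : ℝ))
      = τ ^ p / ((p+(j+1)).factorial : ℝ) := by
    rw [show p + (j+1) = n from by omega]
    field_simp
    ring
  have e_α : ((j+1 : ℕ) : ℝ)/τ * (1/(((0+(j+1)).factorial : ℝ))) = 1/((j.factorial : ℝ) * τ) := by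
    rw [show 0 + (j+1) = j + 1 from by omega, Nat.factorial_succ]
    push_cast
    field_simp
  have e3 : ((((p+1:ℕ)):ℝ) * τ ^ p * τ ^ (n+1) - τ ^ (p+1) * ((((n+1:ℕ)):ℝ) * τ ^ n)) / (τ ^ (n+1))^2
      = -(((j+1 : ℕ) : ℝ)/τ * (τ ^ (p+1) / τ ^ (n+1))) := by
    rw [hn]
    push_cast
    field_simp
    ring
  have H2 : (τ ^ (p+1) / τ ^ (n+1)) • A (W τ)
      = (τ ^ (p+1) / τ ^ (n+1)) • (∑ m ∈ range (n+1), ((b m * τ ^ (n-m)) • (τ ^ m • S τ x)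
          + (b m * (((n-m : ℕ) : ℝ) * τ ^ (n-m-1))) • MM S x m τ))
        - ((τ ^ (p+1) / τ ^ (n+1)) * (τ ^ n / (n.factorial : ℝ))) • x := by
    rw [hAW]
    simp only [smul_sub, Finset.sum_sub_distrib]
    rw [I2, I3, smul_neg, sub_neg_eq_add, Finset.sum_add_distrib]
    simp only [smul_sub, smul_add, smul_smul]
  have per : ∀ l : ℕ, (τ ^ l / (((l+(j+1)).factorial : ℝ))) • (A ^ (l+1)) α
      = ((((l+1:ℕ):ℝ) * τ ^ ((l+1)-1)) / ((((l+1)+(j+1)).factorial : ℝ))) • (A ^ (l+1)) α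
        + (((j+1 : ℕ) : ℝ)/τ) • ((τ ^ (l+1) / ((((l+1)+(j+1)).factorial : ℝ))) • (A ^ (l+1)) α) := by
    intro l
    rw [smul_smul, ← add_smul]
    congr 1
    rw [show (l+1)+(j+1) = (l+(j+1))+1 from by omega, Nat.factorial_succ, Nat.add_sub_cancel]
    push_cast
    field_simp
    ring
  have H1 : A (P τ) = (∑ l ∈ range (p+1),
        (((l:ℝ) * τ ^ (l-1)) / ((l+(j+1)).factorial : ℝ)) • (A ^ l) α)
      + (((j+1 : ℕ) : ℝ)/τ) • P τ - (1/((j.factorial : ℝ) * τ)) • α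
      + ((τ ^ (p+1) / τ ^ (n+1)) * (τ ^ n / (n.factorial : ℝ))) • x := by
    rw [hAP, hP, Finset.smul_sum]
    rw [Finset.sum_range_succ (fun l => (τ ^ l / (((l+(j+1)).factorial : ℝ))) • (A ^ (l+1)) α) p]
    rw [Finset.sum_range_succ' (fun l =>
      (((l:ℝ) * τ ^ (l-1)) / ((l+(j+1)).factorial : ℝ)) • (A ^ l) α) p]
    rw [Finset.sum_range_succ' (fun l =>
      (((j+1 : ℕ) : ℝ)/τ) • ((τ ^ l / (((l+(j+1)).factorial : ℝ))) • (A ^ l) α)) p]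
    have hsum : ∑ l ∈ range p, (τ ^ l / (((l+(j+1)).factorial : ℝ))) • (A ^ (l+1)) α
        = (∑ l ∈ range p, ((((l+1:ℕ):ℝ) * τ ^ ((l+1)-1)) / ((((l+1)+(j+1)).factorial : ℝ))) • (A ^ (l+1)) α)
          + ∑ l ∈ range p, (((j+1 : ℕ) : ℝ)/τ) • ((τ ^ (l+1) / ((((l+1)+(j+1)).factorial : ℝ))) • (A ^ (l+1)) α) := by
      rw [← Finset.sum_add_distrib]
      exact Finset.sum_congr rfl fun l _ => per l
    rw [hsum, ← hx, e_x.symm]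
    simp only [pow_zero, Nat.cast_zero, zero_mul, zero_div, zero_smul, pow_zero A,
      Module.End.one_apply, smul_smul]
    rw [e_α]
    abel
  have key : A (v τ) - ((((j+1:ℕ)):ℝ)/τ) • v τ + (1/((Nat.factorial (j+1-1) : ℝ) * τ)) • α
      = (∑ l ∈ range (p+1), (((l : ℝ) * τ ^ (l-1)) / (Nat.factorial (l + (j+1)) : ℝ)) • (A ^ l) α) +
       ((τ ^ (p+1) / τ ^ (n+1)) • (∑ m ∈ range (n+1),
          ((b m * τ ^ (n-m)) • (τ ^ m • S τ x) +
            (b m * (((n-m : ℕ) : ℝ) * τ ^ (n-m-1))) • MM S x m τ)) +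
        ((((p+1:ℕ):ℝ) * τ ^ p * τ ^ (n+1) - τ ^ (p+1) * (((n+1 : ℕ):ℝ) * τ ^ n)) / (τ ^ (n+1)) ^ 2) • W τ) := by
    rw [show j + 1 - 1 = j from by omega]
    rw [hAv, hrep τ, hg]
    beta_reduce
    rw [H1, H2, e3, smul_add, neg_smul]
    simp only [smul_smul]
    abel
  exact key ▸ hvd
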